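/- arXiv:1109.5308 — 5 statements merged into one kernel-verified Lean document; each statement's English description precedes it below -/
import Mathlib

section
/- Let (Gₙ)ₙ∈ℕ be a sequence of finite discrete groups each with at least 2 elements, and let G = ∏ₙ Gₙ with the product topology and its Haar (product) probability measure. Then there exists a compact subset C ⊆ G of Haar measure zero such that for every sequence of subsets Sₙ ⊆ Gₙ' (where the factors are suitably grouped into finite blocks Gₙ' with |Gₙ'| > 2(n+3)) with |Sₙ| ≤ n+2 for all n, there exists g ∈ G with ∏ₙ Sₙ ⊆ g·C. -/
open MeasureTheory Pointwise

open scoped ENNReal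

/-- `aa n = 0 + 2 + 3 + ... = ∑_{m<n} (m+2)`. -/
def aaP : ℕ → ℕ
  | 0 => 0
  | n + 1 => aaP n + n + 2

lemma aaP_succ (n : ℕ) : aaP (n + 1) = aaP n + n + 2 := rfl

lemma aaP_strictMono : StrictMono aaP :=
  strictMono_nat_of_lt_succ fun n => by rw [aaP_succ]; omega

lemma aaP_mono : Monotone aaP := aaP_strictMono.monotone

lemma le_aaP (n : ℕ) : n ≤ aaP n := aaP_strictMono.le_apply

lemma aaP_add_le (m c : ℕ) : aaP m + 2 * c ≤ aaP (m + c) := by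
  induction c with
  | zero => simp
  | succ c ih =>
    have h2 : aaP (m + (c + 1)) = aaP (m + c) + (m + c) + 2 := rfl
    omega

/-- the index of the fine block containing `i`. -/
def biP (i : ℕ) : ℕ := Nat.findGreatest (fun t => aaP t ≤ i) i

lemma aaP_biP_le (i : ℕ) : aaP (biP i) ≤ i :=
  Nat.findGreatest_spec (P := fun t => aaP t ≤ i) (Nat.zero_le i) (by simp [aaP])

lemma lt_aaP_biP_succ (i : ℕ) : i < aaP (biP i + 1) := by
  by_contra h
  push_neg at h
  have h2 : biP i + 1 ≤ i := le_trans (le_aaP _) h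
  have h3 : biP i + 1 ≤ biP i := Nat.le_findGreatest h2 h
  omega

lemma biP_unique {i t : ℕ} (h1 : aaP t ≤ i) (h2 : i < aaP (t + 1)) : biP i = t := by
  refine le_antisymm ?_ (Nat.le_findGreatest (le_trans (le_aaP t) h1) h1)
  by_contra h
  push_neg at h
  have : aaP (t + 1) ≤ aaP (biP i) := aaP_mono h
  have := aaP_biP_le i
  omega

/-- the function `g` built from a system of enumerations `y`. -/
def gdefP (G : ℕ → Type) [∀ n, One (G n)]
    (y : (n : ℕ) → Fin (n + 2) → ((i : Finset.Ico (aaP (aaP n)) (aaP (aaP (n + 1)))) → G i.1)) :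
    ∀ i, G i := fun i =>
  if h : biP i - aaP (biP (biP i)) < biP (biP i) + 2 ∧
      i ∈ Finset.Ico (aaP (aaP (biP (biP i)))) (aaP (aaP (biP (biP i) + 1)))
  then y (biP (biP i)) ⟨biP i - aaP (biP (biP i)), h.1⟩ ⟨i, h.2⟩ else 1

lemma gdefP_eval (G : ℕ → Type) [∀ n, One (G n)]
    (y : (n : ℕ) → Fin (n + 2) → ((i : Finset.Ico (aaP (aaP n)) (aaP (aaP (n + 1)))) → G i.1))
    (i t n : ℕ) (h1 : aaP t ≤ i) (h2 : i < aaP (t + 1)) (h3 : aaP n ≤ t) (h4 : t < aaP (n + 1))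
    (hj : t - aaP n < n + 2) (hi : i ∈ Finset.Ico (aaP (aaP n)) (aaP (aaP (n + 1)))) :
    gdefP G y i = y n ⟨t - aaP n, hj⟩ ⟨i, hi⟩ := by
  have e1 : biP i = t := biP_unique h1 h2
  subst e1
  have e2 : biP (biP i) = n := biP_unique h3 h4
  subst e2
  rw [gdefP, dif_pos ⟨hj, hi⟩]


/-- Let `(Gₙ)` be a sequence of finite discrete groups, each of at least 2 elements, and let
`G = ∏ₙ Gₙ` with the product topology and a Haar measure `μ`. Then there is a compact set
`C ⊆ G` of Haar measure zero and a grouping of the coordinates into consecutive finite blocks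
`Gₙ' = ∏_{kₙ ≤ i < kₙ₊₁} Gᵢ` with `|Gₙ'| > 2(n+3)`, such that for every sequence of sets
`Sₙ ⊆ Gₙ'` with `|Sₙ| ≤ n+2` there is `g ∈ G` with the corresponding slalom
`∏ₙ Sₙ ⊆ g • C`. -/
theorem product_of_finite_groups_is_nice (G : ℕ → Type) [∀ n, Group (G n)]
    [∀ n, Fintype (G n)] [∀ n, TopologicalSpace (G n)] [∀ n, DiscreteTopology (G n)]
    (hcard : ∀ n, 2 ≤ Fintype.card (G n))
    [MeasurableSpace (∀ n, G n)] [BorelSpace (∀ n, G n)]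
    (μ : Measure (∀ n, G n)) [μ.IsHaarMeasure] :
    ∃ C : Set (∀ n, G n), IsCompact C ∧ μ C = 0 ∧
      ∃ k : ℕ → ℕ, k 0 = 0 ∧ StrictMono k ∧
        (∀ n, 2 * (n + 3) < ∏ i ∈ Finset.Ico (k n) (k (n + 1)), Fintype.card (G i)) ∧
        ∀ S : (n : ℕ) → Set ((i : Finset.Ico (k n) (k (n + 1))) → G i.1),
          (∀ n, (S n).ncard ≤ n + 2) →
          ∃ g : ∀ n, G n,
            {x : ∀ n, G n | ∀ n, (fun i : Finset.Ico (k n) (k (n + 1)) => x i.1) ∈ S n}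
              ⊆ g • C := by
  classical
  set C : Set (∀ n, G n) :=
    {x | ∀ n, ∃ t ∈ Finset.Ico (aaP n) (aaP (n + 1)),
      ∀ i ∈ Finset.Ico (aaP t) (aaP (t + 1)), x i = 1} with hC
  have hclosed : IsClosed C := by
    have : C = ⋂ n, ⋃ t ∈ Finset.Ico (aaP n) (aaP (n + 1)),
        ⋂ i ∈ Finset.Ico (aaP t) (aaP (t + 1)), {x : ∀ m, G m | x i = 1} := by
      ext x; simp [hC]
    rw [this]
    refine isClosed_iInter fun n => ?_
    refine (Finset.Ico (aaP n) (aaP (n + 1))).finite_toSet.isClosed_biUnion fun t _ => ?_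
    refine isClosed_biInter fun i _ => ?_
    exact (isClosed_discrete {1}).preimage (continuous_apply i)
  have hcomp : IsCompact C := hclosed.isCompact
  have hnull : μ C = 0 := by
    have hμlt : μ Set.univ < ⊤ := IsCompact.measure_lt_top isCompact_univ
    have key : ∀ N : ℕ, 2 ^ N * μ C ≤ μ Set.univ := by
      intro N
      set M := aaP (aaP N) with hM
      set Z : (∀ i : Fin M, G i) → Set (∀ n, G n) :=
        fun w => {x | ∀ i : Fin M, x i = w i} with hZ
      have hZmeas : ∀ w, MeasurableSet (Z w) := by
        intro w
        have hzi : Z w = ⋂ i : Fin M, (fun x : ∀ n, G n => x i) ⁻¹' {w i} := by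
          ext x; simp [hZ]
        rw [hzi]
        exact MeasurableSet.iInter fun i =>
          ((isClosed_discrete {w i}).preimage (continuous_apply (i : ℕ))).measurableSet
      have hZtrans : ∀ w, μ (Z w) = μ (Z 1) := by
        intro w
        set g : ∀ n, G n := fun n => if h : n < M then w ⟨n, h⟩ else 1 with hg
        have hgi : ∀ i : Fin M, g i = w i := by
          intro i
          rw [hg]
          simp only [dif_pos i.isLt, Fin.eta]
        have hzz : Z w = (fun x => g⁻¹ * x) ⁻¹' (Z 1) := by
          ext x
          simp only [hZ, Set.mem_preimage, Set.mem_setOf_eq, Pi.mul_apply, Pi.inv_apply,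
            Pi.one_apply]
          constructor
          · intro h i
            rw [hgi i, h i]
            exact inv_mul_cancel (w i)
          · intro h i
            have h2 := h i
            rw [hgi i] at h2
            exact (inv_mul_eq_one.mp h2).symm
        rw [hzz]
        exact measure_preimage_mul μ g⁻¹ (Z 1)
      set W : Finset (∀ i : Fin M, G i) :=
        Fintype.piFinset (fun i : Fin M => (Finset.univ : Finset (G i))) with hW
      have hdisj : (↑W : Set (∀ i : Fin M, G i)).PairwiseDisjoint Z := by
        intro w _ w' _ hne
        rw [Function.onFun, Set.disjoint_left]
        intro x hxw hxw'
        exact hne (funext fun i => (hxw i).symm.trans (hxw' i))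
      have huniv : (Set.univ : Set (∀ n, G n)) = ⋃ w ∈ W, Z w := by
        ext x
        simp only [Set.mem_univ, true_iff, Set.mem_iUnion]
        exact ⟨fun i => x i, by simp [hW], fun i => rfl⟩
      have hμuniv : μ Set.univ = ((∏ i : Fin M, Fintype.card (G i) : ℕ) : ℝ≥0∞) * μ (Z 1) := by
        rw [huniv, measure_biUnion_finset hdisj (fun w _ => hZmeas w)]
        calc ∑ w ∈ W, μ (Z w) = ∑ w ∈ W, μ (Z 1) := Finset.sum_congr rfl fun w _ => hZtrans w
          _ = W.card • μ (Z 1) := Finset.sum_const _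
          _ = _ := by
              rw [nsmul_eq_mul, hW, Fintype.card_piFinset]
              simp [Finset.card_univ]
      set B : Finset (∀ i : Fin M, G i) := W.filter (fun w => ∀ n, n < N →
        ∃ t ∈ Finset.Ico (aaP n) (aaP (n + 1)), ∀ i (h : i < M),
          i ∈ Finset.Ico (aaP t) (aaP (t + 1)) → w ⟨i, h⟩ = 1) with hB
      have hCB : C ⊆ ⋃ w ∈ B, Z w := by
        intro x hx
        have hxC : ∀ n, ∃ t ∈ Finset.Ico (aaP n) (aaP (n + 1)),
            ∀ i ∈ Finset.Ico (aaP t) (aaP (t + 1)), x i = 1 := hx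
        refine Set.mem_iUnion₂.mpr ⟨(fun i : Fin M => x i), ?_, fun i => rfl⟩
        rw [hB, Finset.mem_filter]
        refine ⟨by simp [hW], fun n _ => ?_⟩
        obtain ⟨t, ht, hcond⟩ := hxC n
        exact ⟨t, ht, fun i h hi => hcond i hi⟩
      have hμB : μ (⋃ w ∈ B, Z w) = (B.card : ℝ≥0∞) * μ (Z 1) := by
        rw [measure_biUnion_finset
          (hdisj.subset (Finset.coe_subset.mpr (Finset.filter_subset _ _)))
          (fun w _ => hZmeas w)]
        calc ∑ w ∈ B, μ (Z w) = ∑ w ∈ B, μ (Z 1) := Finset.sum_congr rfl fun w _ => hZtrans w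
          _ = B.card • μ (Z 1) := Finset.sum_const _
          _ = _ := by rw [nsmul_eq_mul]
      have hcount : B.card * 2 ^ N ≤ ∏ i : Fin M, Fintype.card (G i) := by
        set τSet : Finset (∀ n : Fin N, ℕ) :=
          Fintype.piFinset (fun n : Fin N => Finset.Ico (aaP n.1) (aaP (n.1 + 1))) with hτ
        set F : (∀ n : Fin N, ℕ) → Finset (∀ i : Fin M, G i) := fun τ =>
          Fintype.piFinset (fun i : Fin M =>
            if ∃ n : Fin N, (i : ℕ) ∈ Finset.Ico (aaP (τ n)) (aaP (τ n + 1)) then {1}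
            else Finset.univ) with hF
        have hBsub : B ⊆ τSet.biUnion F := by
          intro w hw
          rw [hB, Finset.mem_filter] at hw
          choose t ht hcond using fun n : Fin N => hw.2 n.1 n.2
          refine Finset.mem_biUnion.2 ⟨t, ?_, ?_⟩
          · rw [hτ, Fintype.mem_piFinset]; exact ht
          · rw [hF, Fintype.mem_piFinset]
            intro i
            split_ifs with h
            · rcases h with ⟨n, hn⟩
              rw [Finset.mem_singleton]
              have := hcond n i.1 i.isLt hn
              simpa [Fin.eta] using this
            · exact Finset.mem_univ _
        have hFbound : ∀ τ ∈ τSet,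
            (F τ).card * ∏ n : Fin N, 2 ^ (n.1 + 2) ≤ ∏ i : Fin M, Fintype.card (G i) := by
          intro τ hτm
          rw [hτ, Fintype.mem_piFinset] at hτm
          have hτb : ∀ n : Fin N, aaP n.1 ≤ τ n ∧ τ n < aaP (n.1 + 1) :=
            fun n => Finset.mem_Ico.mp (hτm n)
          have hblt : ∀ n : Fin N, ∀ m ∈ Finset.Ico (aaP (τ n)) (aaP (τ n + 1)), m < M := by
            intro n m hm
            rw [Finset.mem_Ico] at hm
            have h1 : aaP (τ n + 1) ≤ aaP (aaP (n.1 + 1)) := aaP_mono (hτb n).2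
            have h2 : aaP (aaP (n.1 + 1)) ≤ aaP (aaP N) := aaP_mono (aaP_mono n.2)
            omega
          set p : Fin M → Prop :=
            fun i => ∃ n : Fin N, (i : ℕ) ∈ Finset.Ico (aaP (τ n)) (aaP (τ n + 1)) with hp
          have hsplit : (∏ i ∈ Finset.univ.filter p, Fintype.card (G i)) *
              (∏ i ∈ Finset.univ.filter (fun i => ¬ p i), Fintype.card (G i)) =
              ∏ i : Fin M, Fintype.card (G i) :=
            Finset.prod_filter_mul_prod_filter_not _ _ _
          have hFcard2 : (F τ).card =
              ∏ i ∈ Finset.univ.filter (fun i => ¬ p i), Fintype.card (G i) := by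
            rw [hF, Fintype.card_piFinset]
            have : ∀ i : Fin M,
                ((if p i then ({1} : Finset (G i)) else Finset.univ)).card =
                if p i then 1 else Fintype.card (G i) := by
              intro i; split_ifs <;> simp
            calc ∏ i : Fin M, ((if p i then ({1} : Finset (G i)) else Finset.univ)).card
                = ∏ i : Fin M, (if p i then 1 else Fintype.card (G i)) :=
                  Finset.prod_congr rfl fun i _ => this i
              _ = (∏ i ∈ Finset.univ.filter p, 1) *
                  ∏ i ∈ Finset.univ.filter (fun i => ¬ p i), Fintype.card (G i) :=
                  Finset.prod_ite _ _
              _ = _ := by rw [Finset.prod_const_one, one_mul]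
          have hfilter : Finset.univ.filter p = Finset.univ.biUnion
              (fun n : Fin N => (Finset.Ico (aaP (τ n)) (aaP (τ n + 1))).attachFin (hblt n)) := by
            ext i
            simp [hp, Finset.mem_biUnion, Finset.mem_attachFin]
          have hdisjb : (↑(Finset.univ : Finset (Fin N)) : Set (Fin N)).PairwiseDisjoint
              (fun n : Fin N => (Finset.Ico (aaP (τ n)) (aaP (τ n + 1))).attachFin (hblt n)) := by
            intro n _ n' _ hne
            rw [Function.onFun, Finset.disjoint_left]
            intro i hi hi'
            rw [Finset.mem_attachFin, Finset.mem_Ico] at hi hi'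
            have hnn : τ n ≠ τ n' := by
              intro he
              apply hne
              apply Fin.ext
              have b := hτb n
              have b' := hτb n'
              rcases lt_trichotomy n.1 n'.1 with h | h | h
              · have : aaP (n.1 + 1) ≤ aaP n'.1 := aaP_mono h
                omega
              · exact h
              · have : aaP (n'.1 + 1) ≤ aaP n.1 := aaP_mono h
                omega
            rcases Nat.lt_or_ge (τ n) (τ n') with h | h
            · have : aaP (τ n + 1) ≤ aaP (τ n') := aaP_mono h
              omega
            · have h2 : τ n' < τ n := by omega
              have : aaP (τ n' + 1) ≤ aaP (τ n) := aaP_mono h2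
              omega
          have hUprod : ∏ n : Fin N, 2 ^ (n.1 + 2) ≤
              ∏ i ∈ Finset.univ.filter p, Fintype.card (G i) := by
            rw [hfilter, Finset.prod_biUnion hdisjb]
            refine Finset.prod_le_prod (fun _ _ => by positivity) fun n _ => ?_
            calc (2 : ℕ) ^ (n.1 + 2)
                ≤ 2 ^ ((Finset.Ico (aaP (τ n)) (aaP (τ n + 1))).attachFin (hblt n)).card := by
                  apply Nat.pow_le_pow_right (by norm_num)
                  rw [Finset.card_attachFin, Nat.card_Ico]
                  have hs : aaP (τ n + 1) = aaP (τ n) + τ n + 2 := rfl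
                  have h1 := (hτb n).1
                  have h2 := le_aaP n.1
                  omega
              _ = ∏ _i ∈ (Finset.Ico (aaP (τ n)) (aaP (τ n + 1))).attachFin (hblt n), 2 :=
                  (Finset.prod_const 2).symm
              _ ≤ _ := Finset.prod_le_prod (fun _ _ => by norm_num) (fun i _ => hcard i)
          calc (F τ).card * ∏ n : Fin N, 2 ^ (n.1 + 2)
              ≤ (∏ i ∈ Finset.univ.filter (fun i => ¬ p i), Fintype.card (G i)) *
                ∏ i ∈ Finset.univ.filter p, Fintype.card (G i) := by
                rw [hFcard2]
                exact Nat.mul_le_mul_left _ hUprod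
            _ = ∏ i : Fin M, Fintype.card (G i) := by rw [mul_comm]; exact hsplit
        have hsum : B.card ≤ ∑ τ ∈ τSet, (F τ).card :=
          le_trans (Finset.card_le_card hBsub) Finset.card_biUnion_le
        set R := ∏ n : Fin N, (n.1 + 2) with hR
        have hτcard : τSet.card = R := by
          rw [hτ, Fintype.card_piFinset]
          exact Finset.prod_congr rfl fun n _ => by
            rw [Nat.card_Ico]
            have hs : aaP (n.1 + 1) = aaP n.1 + n.1 + 2 := rfl
            omega
        have hQR : 2 ^ N * R ≤ ∏ n : Fin N, 2 ^ (n.1 + 2) := by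
          have h1 : (2 : ℕ) ^ N = ∏ _n : Fin N, 2 := by
            rw [Finset.prod_const, Finset.card_univ, Fintype.card_fin]
          rw [h1, hR, ← Finset.prod_mul_distrib]
          refine Finset.prod_le_prod (fun _ _ => by positivity) fun n _ => ?_
          have h3 := Nat.lt_two_pow_self (n := n.1 + 1)
          have h2 : (2 : ℕ) ^ (n.1 + 2) = 2 * 2 ^ (n.1 + 1) := by ring
          omega
        have hchain : R * (B.card * 2 ^ N) ≤ R * ∏ i : Fin M, Fintype.card (G i) := by
          calc R * (B.card * 2 ^ N) = B.card * (2 ^ N * R) := by ring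
            _ ≤ (∑ τ ∈ τSet, (F τ).card) * (2 ^ N * R) := Nat.mul_le_mul_right _ hsum
            _ ≤ (∑ τ ∈ τSet, (F τ).card) * ∏ n : Fin N, 2 ^ (n.1 + 2) :=
                Nat.mul_le_mul_left _ hQR
            _ = ∑ τ ∈ τSet, (F τ).card * ∏ n : Fin N, 2 ^ (n.1 + 2) := Finset.sum_mul _ _ _
            _ ≤ ∑ _τ ∈ τSet, ∏ i : Fin M, Fintype.card (G i) := Finset.sum_le_sum hFbound
            _ = τSet.card * ∏ i : Fin M, Fintype.card (G i) := by
                rw [Finset.sum_const, smul_eq_mul]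
            _ = R * ∏ i : Fin M, Fintype.card (G i) := by rw [hτcard]
        have hRpos : 0 < R := Finset.prod_pos fun _ _ => by omega
        exact Nat.le_of_mul_le_mul_left hchain hRpos
      calc 2 ^ N * μ C ≤ 2 ^ N * μ (⋃ w ∈ B, Z w) := mul_le_mul_right (measure_mono hCB) _
        _ = (2 : ℝ≥0∞) ^ N * ((B.card : ℝ≥0∞) * μ (Z 1)) := by rw [hμB]
        _ = ((B.card * 2 ^ N : ℕ) : ℝ≥0∞) * μ (Z 1) := by push_cast; ring
        _ ≤ ((∏ i : Fin M, Fintype.card (G i) : ℕ) : ℝ≥0∞) * μ (Z 1) :=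
            mul_le_mul_left (Nat.cast_le.2 hcount) _
        _ = μ Set.univ := hμuniv.symm
    by_contra hC0
    have hCfin : μ C ≠ ⊤ := ((measure_mono (Set.subset_univ C)).trans_lt hμlt).ne
    obtain ⟨n, hn⟩ := ENNReal.exists_nat_gt (ENNReal.div_lt_top hμlt.ne hC0).ne
    have h1 : μ Set.univ < (n : ℝ≥0∞) * μ C :=
      (ENNReal.div_lt_iff (Or.inl hC0) (Or.inl hCfin)).1 hn
    have h2 : (n : ℝ≥0∞) * μ C ≤ 2 ^ n * μ C := by
      apply mul_le_mul_left
      calc (n : ℝ≥0∞) ≤ ((2 ^ n : ℕ) : ℝ≥0∞) := Nat.cast_le.2 (Nat.lt_two_pow_self (n := n)).le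
        _ = 2 ^ n := by push_cast; ring
    exact absurd (key n) (not_le.mpr (h1.trans_le h2))
  refine ⟨C, hcomp, hnull, fun n => aaP (aaP n), rfl, aaP_strictMono.comp aaP_strictMono, ?_, ?_⟩
  · -- block cardinality lower bound
    intro n
    show 2 * (n + 3) < ∏ i ∈ Finset.Ico (aaP (aaP n)) (aaP (aaP (n + 1))), Fintype.card (G i)
    have hdiff : aaP (aaP n) + 2 * (n + 2) ≤ aaP (aaP (n + 1)) := by
      have := aaP_add_le (aaP n) (n + 2)
      have h2 : aaP (n + 1) = aaP n + n + 2 := rfl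
      have h3 : aaP n + (n + 2) = aaP (n + 1) := by omega
      rw [h3] at this; omega
    have h1 : (2 : ℕ) ^ (2 * n + 4) ≤
        ∏ i ∈ Finset.Ico (aaP (aaP n)) (aaP (aaP (n + 1))), Fintype.card (G i) := by
      calc (2 : ℕ) ^ (2 * n + 4)
          ≤ 2 ^ (Finset.Ico (aaP (aaP n)) (aaP (aaP (n + 1)))).card := by
            apply Nat.pow_le_pow_right (by norm_num)
            rw [Nat.card_Ico]; omega
        _ = ∏ _i ∈ Finset.Ico (aaP (aaP n)) (aaP (aaP (n + 1))), 2 := (Finset.prod_const 2).symm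
        _ ≤ _ := Finset.prod_le_prod (fun _ _ => by norm_num) (fun i _ => hcard i)
    have h2 : 2 * (n + 3) < 2 ^ (2 * n + 4) := by
      have := Nat.lt_two_pow_self (n := n + 3)
      have h4 : (2 : ℕ) ^ (n + 4) ≤ 2 ^ (2 * n + 4) := Nat.pow_le_pow_right (by norm_num) (by omega)
      have h5 : (2 : ℕ) ^ (n + 4) = 2 * 2 ^ (n + 3) := by ring
      omega
    omega
  · -- covering property
    intro S hS
    by_cases hne : ∀ n, (S n).Nonempty
    · have hex : ∀ n, ∃ y : Fin (n + 2) →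
          ((i : Finset.Ico (aaP (aaP n)) (aaP (aaP (n + 1)))) → G i.1), S n ⊆ Set.range y := by
        intro n
        obtain ⟨m, f, hf⟩ := (Set.toFinite (S n)).fin_embedding
        have hm : m ≤ n + 2 := by
          have h1 : Nat.card (Set.range ⇑f) = m := by
            rw [Nat.card_range_of_injective f.injective]; simp
          rw [hf, Nat.card_coe_set_eq] at h1
          exact le_of_eq_of_le h1.symm (hS n)
        have hm0 : 0 < m := by
          obtain ⟨z, hz⟩ := hne n
          rw [← hf] at hz
          obtain ⟨j, -⟩ := hz
          exact j.pos
        refine ⟨fun j => if h : j.1 < m then f ⟨j.1, h⟩ else f ⟨0, hm0⟩, ?_⟩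
        intro z hz
        rw [← hf] at hz
        obtain ⟨j, rfl⟩ := hz
        refine ⟨⟨j.1, lt_of_lt_of_le j.2 hm⟩, ?_⟩
        simp only [dif_pos j.2, Fin.eta]
      choose y hy using hex
      refine ⟨gdefP G y, ?_⟩
      intro x hx
      rw [Set.mem_smul_set_iff_inv_smul_mem]
      simp only [hC, Set.mem_setOf_eq]
      intro n
      obtain ⟨j, hj⟩ := hy n (hx n)
      have haan : aaP (n + 1) = aaP n + n + 2 := rfl
      have hjlt := j.2
      refine ⟨aaP n + j.1, ?_, ?_⟩
      · rw [Finset.mem_Ico]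
        omega
      · intro i hi
        rw [Finset.mem_Ico] at hi
        have hmem : i ∈ Finset.Ico (aaP (aaP n)) (aaP (aaP (n + 1))) := by
          rw [Finset.mem_Ico]
          refine ⟨le_trans (aaP_mono (Nat.le_add_right _ _)) hi.1,
            lt_of_lt_of_le hi.2 (aaP_mono (by omega))⟩
        have hg : gdefP G y i = y n ⟨aaP n + j.1 - aaP n, by omega⟩ ⟨i, hmem⟩ :=
          gdefP_eval G y i (aaP n + j.1) n hi.1 hi.2 (Nat.le_add_right _ _) (by omega)
            (by omega) hmem
        show ((gdefP G y)⁻¹ • x) i = 1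
        have hsm : ((gdefP G y)⁻¹ • x) i = (gdefP G y i)⁻¹ * x i := rfl
        rw [hsm, hg]
        have hje : (⟨aaP n + j.1 - aaP n, by omega⟩ : Fin (n + 2)) = j := Fin.ext (show aaP n + j.1 - aaP n = j.1 by omega)
        rw [hje]
        have hxi : y n j ⟨i, hmem⟩ = x i := congrFun hj ⟨i, hmem⟩
        rw [hxi]
        exact inv_mul_cancel (x i)
    · push_neg at hne
      obtain ⟨n, hn⟩ := hne
      exact ⟨1, fun x hx => absurd (hx n) (by simp [hn])⟩
end

section
/- Let p be a prime and let G be an infinite abelian p-group such that for every n ∈ ℕ the subgroup G[pⁿ] = {g ∈ G : pⁿ·g = 0} is finite. Then G contains a subgroup isomorphic to the Prüfer p-group ℤ(p^∞). -/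
/-- The Prüfer (quasicyclic) group `ℤ(p^∞)`: the `p`-primary component of `ℚ/ℤ`. -/
def PruferGroup (p : ℕ) [Fact p.Prime] : Type :=
  AddCommGroup.primaryComponent (ℚ ⧸ AddSubgroup.zmultiples (1 : ℚ)) p

noncomputable instance (p : ℕ) [Fact p.Prime] : AddCommGroup (PruferGroup p) :=
  (AddCommGroup.primaryComponent (ℚ ⧸ AddSubgroup.zmultiples (1 : ℚ)) p).toAddCommGroup

theorem iInter_nonempty_of_antitone {α : Type*} {s : ℕ → Set α}
    (hdec : ∀ n, s (n + 1) ⊆ s n) (hfin : ∀ n, (s n).Finite)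
    (hne : ∀ n, (s n).Nonempty) : (⋂ n, s n).Nonempty := by
  have hanti : ∀ {n m : ℕ}, n ≤ m → s m ⊆ s n := by
    intro n m h
    induction h with
    | refl => exact fun _ h => h
    | step h ih => exact fun x hx => ih (hdec _ hx)
  obtain ⟨N, hN⟩ : ∃ N : ℕ, ∀ m : ℕ, (s N).ncard ≤ (s m).ncard := by
    refine ⟨Function.argmin (fun n => (s n).ncard), fun m => ?_⟩
    exact le_of_not_gt (Function.not_lt_argmin (fun n => (s n).ncard) m)
  have hstab : ∀ m, N ≤ m → s m = s N := fun m hm =>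
    Set.eq_of_subset_of_ncard_le (hanti hm) (hN m) (hfin N)
  obtain ⟨a, ha⟩ := hne N
  refine ⟨a, Set.mem_iInter.mpr fun n => ?_⟩
  rcases le_total n N with h | h
  · exact hanti h ha
  · rw [hstab n h]; exact ha

-- an element with p^n • g = 0 and p^(n-1) • g ≠ 0 has order exactly p^n
theorem order_eq_pow_aux {G : Type*} [AddCommGroup G] {p : ℕ} (hp : p.Prime) {g : G} {n : ℕ}
    (h1 : p ^ n • g = 0) (h2 : n ≠ 0 → p ^ (n - 1) • g ≠ 0) : addOrderOf g = p ^ n := by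
  obtain ⟨j, hj, hjeq⟩ := (Nat.dvd_prime_pow hp).mp (addOrderOf_dvd_of_nsmul_eq_zero h1)
  rcases eq_or_lt_of_le hj with rfl | hlt
  · exact hjeq
  · exfalso
    have hn0 : n ≠ 0 := by omega
    apply h2 hn0
    apply addOrderOf_dvd_iff_nsmul_eq_zero.mp
    rw [hjeq]
    exact pow_dvd_pow p (by omega)

theorem aux_prufer (p : ℕ) [Fact p.Prime] {G : Type*} [AddCommGroup G] (w : ℕ → G)
    (hws : ∀ n, p • w (n + 1) = w n) (hword : ∀ n, addOrderOf (w n) = p ^ n) :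
    ∃ H : AddSubgroup G, Nonempty (H ≃+ PruferGroup p) := by
  classical
  have hp : p.Prime := Fact.out
  have hp0 : (p : ℚ) ≠ 0 := Nat.cast_ne_zero.mpr hp.pos.ne'
  have hzero : ∀ n, p ^ n • w n = 0 := fun n => by
    rw [← hword n]; exact addOrderOf_nsmul_eq_zero _
  have hpow : ∀ n k, p ^ k • w (n + k) = w n := by
    intro n k
    induction k with
    | zero => simp
    | succ k ih =>
      rw [pow_succ, mul_smul]
      show p ^ k • (p • w (n + k + 1)) = w n
      rw [hws (n + k), ih]
  have hzpow : ∀ n k, ((p : ℤ) ^ k) • w (n + k) = w n := by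
    intro n k
    have : ((p : ℤ) ^ k) = ((p ^ k : ℕ) : ℤ) := by push_cast; ring
    rw [this, natCast_zsmul]; exact hpow n k
  -- every element of the Prüfer group has a representative with p-power denominator
  have hex : ∀ x : PruferGroup p, ∃ nq : ℕ × ℚ,
      QuotientAddGroup.mk nq.2 = x.1 ∧ ((p : ℚ) ^ nq.1 * nq.2).den = 1 := by
    intro x
    obtain ⟨n, hn⟩ := x.2
    obtain ⟨q, hq⟩ := QuotientAddGroup.mk_surjective x.1
    have h0 : p ^ n • x.1 = 0 := by rw [← hn]
    rw [← hq, ← QuotientAddGroup.mk_nsmul] at h0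
    have hmem := (QuotientAddGroup.eq_zero_iff _).mp h0
    obtain ⟨z, hz⟩ := AddSubgroup.mem_zmultiples_iff.mp hmem
    have hval : (p : ℚ) ^ n * q = (z : ℚ) := by
      have : (z : ℚ) = (p ^ n : ℕ) • q := by rw [← hz]; simp
      rw [this]; ring
    exact ⟨(n, q), hq, by rw [hval]; exact Rat.den_intCast z⟩
  -- raising the level
  have keylift : ∀ (n k : ℕ) (q : ℚ), ((p : ℚ) ^ n * q).den = 1 →
      ((p : ℚ) ^ (n + k) * q).den = 1 ∧
      ((p : ℚ) ^ (n + k) * q).num • w (n + k) = ((p : ℚ) ^ n * q).num • w n := by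
    intro n k q hd
    have hr : ((((p : ℚ) ^ n * q).num : ℤ) : ℚ) = (p : ℚ) ^ n * q := (Rat.den_eq_one_iff _).mp hd
    have heq : (p : ℚ) ^ (n + k) * q = (((p : ℤ) ^ k * ((p : ℚ) ^ n * q).num : ℤ) : ℚ) := by
      push_cast
      rw [hr]; ring
    constructor
    · rw [heq]; exact Rat.den_intCast _
    · rw [heq, Rat.num_intCast, mul_comm, mul_smul, hzpow n k]
  -- same level, different representatives
  have keysame : ∀ (m : ℕ) (q q' : ℚ),
      (QuotientAddGroup.mk q : ℚ ⧸ AddSubgroup.zmultiples (1 : ℚ)) = QuotientAddGroup.mk q' →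
      ((p : ℚ) ^ m * q).den = 1 → ((p : ℚ) ^ m * q').den = 1 →
      ((p : ℚ) ^ m * q).num • w m = ((p : ℚ) ^ m * q').num • w m := by
    intro m q q' h hd hd'
    obtain ⟨z, hz⟩ := AddSubgroup.mem_zmultiples_iff.mp (QuotientAddGroup.eq.mp h)
    have hq' : q' = q + (z : ℚ) := by
      have : (z : ℚ) = -q + q' := by rw [← hz]; simp
      rw [this]; ring
    have hr : ((((p : ℚ) ^ m * q).num : ℤ) : ℚ) = (p : ℚ) ^ m * q := (Rat.den_eq_one_iff _).mp hd
    have heq : (p : ℚ) ^ m * q' = ((((p : ℚ) ^ m * q).num + (p : ℤ) ^ m * z : ℤ) : ℚ) := by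
      rw [hq']; push_cast; rw [hr]; ring
    have hnum : ((p : ℚ) ^ m * q').num = ((p : ℚ) ^ m * q).num + (p : ℤ) ^ m * z := by
      rw [heq, Rat.num_intCast]
    have hzr : ((p : ℤ) ^ m * z) • w m = 0 := by
      rw [mul_comm, mul_smul]
      have h0 : ((p : ℤ) ^ m) • w m = 0 := by
        rw [show ((p : ℤ) ^ m) = ((p ^ m : ℕ) : ℤ) by push_cast; ring, natCast_zsmul]
        exact hzero m
      rw [h0, smul_zero]
    rw [hnum, add_zsmul, hzr, add_zero]
  -- the function
  set F : PruferGroup p → G := fun x =>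
    ((p : ℚ) ^ (hex x).choose.1 * (hex x).choose.2).num • w (hex x).choose.1 with hF
  -- value of F on any admissible representative
  have hFval : ∀ (x : PruferGroup p) (n : ℕ) (q : ℚ), QuotientAddGroup.mk q = x.1 →
      ((p : ℚ) ^ n * q).den = 1 → F x = ((p : ℚ) ^ n * q).num • w n := by
    intro x n q hq hd
    obtain ⟨hq0, hd0⟩ := (hex x).choose_spec
    set n0 := (hex x).choose.1
    set q0 := (hex x).choose.2
    obtain ⟨k, hk⟩ := Nat.exists_eq_add_of_le (le_max_left n0 n)
    obtain ⟨k', hk'⟩ := Nat.exists_eq_add_of_le (le_max_right n0 n)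
    have l0 := keylift n0 k q0 hd0
    have l1 := keylift n k' q hd
    rw [← hk] at l0
    rw [← hk'] at l1
    have hsame := keysame (max n0 n) q0 q (by rw [hq0, hq]) l0.1 l1.1
    rw [hF]
    simp only []
    rw [← l0.2, hsame, l1.2]
  have hmk_add : ∀ (x y : PruferGroup p), (x + y).1 = x.1 + y.1 := fun x y => rfl
  have hmapadd : ∀ x y, F (x + y) = F x + F y := by
    intro x y
    obtain ⟨⟨n, q⟩, hq, hd⟩ := hex x
    obtain ⟨⟨n', q'⟩, hq', hd'⟩ := hex y
    obtain ⟨k, hk⟩ := Nat.exists_eq_add_of_le (le_max_left n n')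
    obtain ⟨k', hk'⟩ := Nat.exists_eq_add_of_le (le_max_right n n')
    set m := max n n'
    have l0 := keylift n k q hd
    have l1 := keylift n' k' q' hd'
    rw [← hk] at l0
    rw [← hk'] at l1
    have hr : ((((p : ℚ) ^ m * q).num : ℤ) : ℚ) = (p : ℚ) ^ m * q := (Rat.den_eq_one_iff _).mp l0.1
    have hr' : ((((p : ℚ) ^ m * q').num : ℤ) : ℚ) = (p : ℚ) ^ m * q' := (Rat.den_eq_one_iff _).mp l1.1
    have heq : (p : ℚ) ^ m * (q + q') =
        ((((p : ℚ) ^ m * q).num + ((p : ℚ) ^ m * q').num : ℤ) : ℚ) := by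
      push_cast; rw [hr, hr']; ring
    have hdsum : ((p : ℚ) ^ m * (q + q')).den = 1 := by rw [heq]; exact Rat.den_intCast _
    have hmk : QuotientAddGroup.mk (q + q') = (x + y).1 := by
      rw [hmk_add, ← hq, ← hq']; exact QuotientAddGroup.mk_add _ _ _
    rw [hFval (x + y) m (q + q') hmk hdsum, hFval x n q hq hd, hFval y n' q' hq' hd']
    rw [← l0.2, ← l1.2]
    have hnum : ((p : ℚ) ^ m * (q + q')).num
        = ((p : ℚ) ^ m * q).num + ((p : ℚ) ^ m * q').num := by rw [heq, Rat.num_intCast]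
    rw [hnum, add_zsmul]
  have hmap0 : F 0 = 0 := by
    have h0 : QuotientAddGroup.mk (0 : ℚ) = (0 : PruferGroup p).1 := rfl
    have := hFval 0 0 (0 : ℚ) h0 (by norm_num)
    simpa using this
  let fhom : PruferGroup p →+ G := ⟨⟨F, hmap0⟩, hmapadd⟩
  have hinj : Function.Injective fhom := by
    rw [injective_iff_map_eq_zero]
    intro x hx
    obtain ⟨⟨n, q⟩, hq, hd⟩ := hex x
    have hx' : ((p : ℚ) ^ n * q).num • w n = 0 := by
      rw [← hFval x n q hq hd]; exact hx
    have hdvd : ((p ^ n : ℕ) : ℤ) ∣ ((p : ℚ) ^ n * q).num := by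
      have := addOrderOf_dvd_iff_zsmul_eq_zero.mpr hx'
      rwa [hword n] at this
    obtain ⟨c, hc⟩ := hdvd
    have hr : ((((p : ℚ) ^ n * q).num : ℤ) : ℚ) = (p : ℚ) ^ n * q := (Rat.den_eq_one_iff _).mp hd
    have hqc : q = (c : ℚ) := by
      have h1 : (p : ℚ) ^ n * q = (p : ℚ) ^ n * (c : ℚ) := by
        rw [← hr, hc]; push_cast; ring
      exact mul_left_cancel₀ (pow_ne_zero n hp0) h1
    have hx1 : x.1 = 0 := by
      rw [← hq, hqc]
      exact (QuotientAddGroup.eq_zero_iff _).mpr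
        (AddSubgroup.mem_zmultiples_iff.mpr ⟨c, by simp⟩)
    exact Subtype.ext hx1
  exact ⟨fhom.range, ⟨(AddMonoidHom.ofInjective hinj).symm⟩⟩

/-- Let `p` be a prime and `G` an infinite abelian `p`-group such that every `pⁿ`-torsion
subgroup `G[pⁿ]` is finite. Then `G` contains a subgroup isomorphic to `ℤ(p^∞)`. -/
theorem infinite_pGroup_finite_torsion_contains_prufer (p : ℕ) [Fact p.Prime]
    (G : Type*) [AddCommGroup G] [Infinite G]
    (hpG : ∀ g : G, ∃ n : ℕ, p ^ n • g = 0)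
    (hfin : ∀ n : ℕ, {g : G | p ^ n • g = 0}.Finite) :
    ∃ H : AddSubgroup G, Nonempty (H ≃+ PruferGroup p) := by
  classical
  have hp : p.Prime := Fact.out
  -- every element has order a power of p
  have horder : ∀ g : G, ∃ m, addOrderOf g = p ^ m := by
    intro g
    obtain ⟨n, hn⟩ := hpG g
    obtain ⟨m, _, hm⟩ := (Nat.dvd_prime_pow hp).mp (addOrderOf_dvd_of_nsmul_eq_zero hn)
    exact ⟨m, hm⟩
  -- there are elements of order exactly p ^ n for every n
  have hOrdn : ∀ n, ∃ g : G, addOrderOf g = p ^ n := by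
    intro n
    obtain ⟨g, hg⟩ : ∃ g : G, p ^ n • g ≠ 0 := by
      by_contra h
      push_neg at h
      have huniv : {g : G | p ^ n • g = 0} = Set.univ := Set.eq_univ_of_forall h
      have hfin' := hfin n
      rw [huniv] at hfin'
      exact Set.infinite_univ hfin'
    obtain ⟨m, hm⟩ := horder g
    have hmzero : p ^ m • g = 0 := by rw [← hm]; exact addOrderOf_nsmul_eq_zero g
    have hnm : n < m := by
      by_contra hh
      push_neg at hh
      apply hg
      obtain ⟨k, rfl⟩ := Nat.exists_eq_add_of_le hh
      rw [pow_add, mul_comm, mul_smul, hmzero, smul_zero]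
    obtain ⟨k, rfl⟩ := Nat.exists_eq_add_of_le hnm.le
    refine ⟨p ^ k • g, order_eq_pow_aux hp ?_ ?_⟩
    · rw [← mul_smul, ← pow_add]; exact hmzero
    · intro hn0 hcon
      rw [← mul_smul, ← pow_add] at hcon
      have hdvd := addOrderOf_dvd_of_nsmul_eq_zero hcon
      rw [hm] at hdvd
      have := (Nat.pow_dvd_pow_iff_le_right hp.one_lt).mp hdvd
      omega
  -- the sets of p^k-divisible elements
  set pk : ℕ → Set G := fun k => Set.range (fun y : G => p ^ k • y) with hpk
  have hpk_dec : ∀ (k : ℕ) (x : G), x ∈ pk (k + 1) → x ∈ pk k := by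
    rintro k x ⟨y, rfl⟩
    exact ⟨p • y, by show p ^ k • (p • y) = p ^ (k + 1) • y; rw [← mul_smul, ← pow_succ]⟩
  -- a nonzero p-torsion element divisible by every power of p
  obtain ⟨a, haD, hap, hane⟩ : ∃ a : G, (∀ k, a ∈ pk k) ∧ p • a = 0 ∧ a ≠ 0 := by
    have hint := iInter_nonempty_of_antitone
        (s := fun k => {x | x ∈ pk k ∧ p • x = 0 ∧ x ≠ 0}) ?_ ?_ ?_
    · obtain ⟨a, ha⟩ := hint
      simp only [Set.mem_iInter] at ha
      exact ⟨a, fun k => (ha k).1, (ha 0).2.1, (ha 0).2.2⟩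
    · rintro k x ⟨h1, h2⟩; exact ⟨hpk_dec k x h1, h2⟩
    · intro k
      apply (hfin 1).subset
      rintro x ⟨_, h2, _⟩
      show p ^ 1 • x = 0
      rwa [pow_one]
    · intro k
      obtain ⟨g, hg⟩ := hOrdn (k + 1)
      refine ⟨p ^ k • g, ⟨g, rfl⟩, ?_, ?_⟩
      · rw [← mul_smul, ← pow_succ']
        rw [← hg]; exact addOrderOf_nsmul_eq_zero g
      · intro hcon
        have hdvd := addOrderOf_dvd_of_nsmul_eq_zero hcon
        rw [hg] at hdvd
        exact absurd ((Nat.pow_dvd_pow_iff_le_right hp.one_lt).mp hdvd) (by omega)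
  -- p-divisibility among infinitely divisible elements
  have hdiv : ∀ d : G, (∀ k, d ∈ pk k) → ∃ e : G, (∀ k, e ∈ pk k) ∧ p • e = d := by
    intro d hd
    obtain ⟨n, hn⟩ := hpG d
    have hint := iInter_nonempty_of_antitone
        (s := fun k => {e | e ∈ pk k ∧ p • e = d}) ?_ ?_ ?_
    · obtain ⟨e, he⟩ := hint
      simp only [Set.mem_iInter] at he
      exact ⟨e, fun k => (he k).1, (he 0).2⟩
    · rintro k x ⟨h1, h2⟩; exact ⟨hpk_dec k x h1, h2⟩
    · intro k
      apply (hfin (n + 1)).subset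
      rintro e ⟨_, h2⟩
      show p ^ (n + 1) • e = 0
      rw [pow_succ, mul_smul, h2, hn]
    · intro k
      obtain ⟨y, hy⟩ := hd (k + 1)
      refine ⟨p ^ k • y, ⟨y, rfl⟩, ?_⟩
      rw [← mul_smul, ← pow_succ']
      exact hy
  -- build the sequence w
  have step : ∀ x : {g : G // ∀ k, g ∈ pk k}, {y : {g : G // ∀ k, g ∈ pk k} // p • y.1 = x.1} :=
    fun x => ⟨⟨(hdiv x.1 x.2).choose, (hdiv x.1 x.2).choose_spec.1⟩, (hdiv x.1 x.2).choose_spec.2⟩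
  let v : ℕ → {g : G // ∀ k, g ∈ pk k} := fun n => Nat.rec ⟨a, haD⟩ (fun _ ih => (step ih).1) n
  have hv : ∀ n, p • (v (n + 1)).1 = (v n).1 := fun n => (step (v n)).2
  let w : ℕ → G := fun n => Nat.rec 0 (fun k _ => (v k).1) n
  have hws : ∀ n, p • w (n + 1) = w n := by
    intro n
    cases n with
    | zero => show p • (v 0).1 = (0 : G); exact hap
    | succ k => exact hv k
  have hwzero : ∀ n, p ^ n • w n = 0 := by
    intro n
    induction n with
    | zero => simp only [pow_zero, one_smul]; rfl
    | succ k ih => rw [pow_succ, mul_smul, hws k, ih]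
  have hwa : ∀ n, p ^ n • w (n + 1) = a := by
    intro n
    induction n with
    | zero => simp only [pow_zero, one_smul]; rfl
    | succ k ih => rw [pow_succ, mul_smul, hws (k + 1), ih]
  have hword : ∀ n, addOrderOf (w n) = p ^ n := by
    intro n
    apply order_eq_pow_aux hp (hwzero n)
    intro hn0 hcon
    obtain ⟨m, rfl⟩ := Nat.exists_eq_succ_of_ne_zero hn0
    rw [Nat.succ_sub_one] at hcon
    exact hane (by rw [← hwa m]; exact hcon)
  exact aux_prufer p w hws hword
end

section
/- Let G be a topological group, H ⊆ G a subgroup, and suppose U ⊆ H, V, K ⊆ G with e ∈ U, e ∈ V, K ⊆ V, K·K⁻¹ ⊆ U·V, H ∩ (U·V) ⊆ U, and the multiplication map is injective on U × K. Then the multiplication map m : H × K → G, m(h,k) = h·k, is injective. -/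
open Pointwise

/-- Let `G` be a topological group, `H ⊆ G` a subgroup, and `U ⊆ H`, `V, K ⊆ G` sets with
`e ∈ U`, `e ∈ V`, `K ⊆ V`, `K·K⁻¹ ⊆ U·V`, `H ∩ (U·V) ⊆ U`, such that multiplication is
injective on `U × K`. Then the multiplication map `m : H × K → G` is injective. -/
theorem mul_injOn_subgroup_prod (G : Type*) [Group G] [TopologicalSpace G]
    [IsTopologicalGroup G] (H : Subgroup G) (U V K : Set G)
    (hUH : U ⊆ (H : Set G)) (hU1 : (1 : G) ∈ U) (hV1 : (1 : G) ∈ V) (hKV : K ⊆ V)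
    (hKK : K * K⁻¹ ⊆ U * V) (hHUV : (H : Set G) ∩ (U * V) ⊆ U)
    (hinj : Set.InjOn (fun p : G × G => p.1 * p.2) (U ×ˢ K)) :
    Set.InjOn (fun p : G × G => p.1 * p.2) ((H : Set G) ×ˢ K) := by
  rintro ⟨h₁, k₁⟩ ⟨hh₁, hk₁⟩ ⟨h₂, k₂⟩ ⟨hh₂, hk₂⟩ heq
  simp only at heq hh₁ hh₂ hk₁ hk₂
  have hd : h₂⁻¹ * h₁ = k₂ * k₁⁻¹ := by
    rw [eq_comm, mul_inv_eq_iff_eq_mul, mul_assoc, heq, ← mul_assoc, inv_mul_cancel, one_mul]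
  have hdU : h₂⁻¹ * h₁ ∈ U := by
    apply hHUV
    refine ⟨mul_mem (inv_mem hh₂) hh₁, hKK ?_⟩
    rw [hd]
    exact Set.mul_mem_mul hk₂ (Set.inv_mem_inv.mpr hk₁)
  have key : (h₂⁻¹ * h₁, k₁) = ((1 : G), k₂) := by
    apply hinj (Set.mk_mem_prod hdU hk₁) (Set.mk_mem_prod hU1 hk₂)
    simp only [one_mul]
    rw [mul_assoc, heq, ← mul_assoc, inv_mul_cancel, one_mul]
  obtain ⟨h1, h2⟩ := Prod.mk.injEq .. ▸ key
  have : h₁ = h₂ := by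
    have := congrArg (h₂ * ·) h1
    simpa [← mul_assoc] using this
  exact Prod.ext this h2
end

section
/- If the real line ℝ can be covered by κ many translates of a compact Lebesgue-null set C, then for every n ≥ 1 and every compact group K, the group K × ℝⁿ can be covered by κ many translates of a compact Haar-null set, namely K × C × [0,1]^{n-1}. -/
set_option synthInstance.maxHeartbeats 400000

open MeasureTheory Pointwise

private lemma aux_prod_compact {n : ℕ} {K : Type} [TopologicalSpace K] [CompactSpace K]
    {L : Set ℝ} (hL : IsCompact L) :
    IsCompact ((Set.univ : Set K) ×ˢ
      {v : Fin (n + 1) → ℝ | v 0 ∈ L ∧ ∀ i, i ≠ 0 → v i ∈ Set.Icc (0 : ℝ) 1}) := by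
  classical
  have hAeq : {v : Fin (n + 1) → ℝ | v 0 ∈ L ∧ ∀ i, i ≠ 0 → v i ∈ Set.Icc (0 : ℝ) 1}
      = Set.pi Set.univ (fun i => if i = 0 then L else Set.Icc (0 : ℝ) 1) := by
    ext v
    simp only [Set.mem_setOf_eq, Set.mem_pi, Set.mem_univ, true_implies]
    constructor
    · rintro ⟨h0, h1⟩ i
      by_cases hi : i = 0
      · subst hi; simpa using h0
      · simpa [hi] using h1 i hi
    · intro h
      refine ⟨by simpa using h 0, fun i hi => by simpa [hi] using h i⟩
  rw [hAeq]
  exact isCompact_univ.prod (isCompact_univ_pi fun i => by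
    by_cases hi : i = 0 <;> simp [hi, hL, isCompact_Icc])

/-- If `ℝ` can be covered by `κ` many translates of a compact Lebesgue-null set `C`, then for
every `n ≥ 1` and every compact group `K`, the group `K × ℝⁿ` can be covered by `κ` many
translates of the compact Haar-null set `K × C × [0,1]^{n-1}`. -/
theorem compact_times_real_power_nice (κ : Cardinal) (C : Set ℝ) (hC : IsCompact C)
    (hCnull : MeasureTheory.volume C = 0)
    (T : Set ℝ) (hT : Cardinal.mk T ≤ κ) (hcov : ⋃ t ∈ T, t +ᵥ C = Set.univ)
    (n : ℕ) (K : Type) [AddGroup K] [TopologicalSpace K] [IsTopologicalAddGroup K]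
    [CompactSpace K]
    [MeasurableSpace (K × (Fin (n + 1) → ℝ))] [BorelSpace (K × (Fin (n + 1) → ℝ))]
    (μ : Measure (K × (Fin (n + 1) → ℝ))) [μ.IsAddHaarMeasure] :
    IsCompact ((Set.univ : Set K) ×ˢ
        {v : Fin (n + 1) → ℝ | v 0 ∈ C ∧ ∀ i, i ≠ 0 → v i ∈ Set.Icc (0 : ℝ) 1}) ∧
    μ ((Set.univ : Set K) ×ˢ
        {v : Fin (n + 1) → ℝ | v 0 ∈ C ∧ ∀ i, i ≠ 0 → v i ∈ Set.Icc (0 : ℝ) 1}) = 0 ∧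
    ∃ T' : Set (K × (Fin (n + 1) → ℝ)), Cardinal.mk T' ≤ κ ∧
      ⋃ t ∈ T', t +ᵥ ((Set.univ : Set K) ×ˢ
        {v : Fin (n + 1) → ℝ | v 0 ∈ C ∧ ∀ i, i ≠ 0 → v i ∈ Set.Icc (0 : ℝ) 1}) =
        Set.univ := by
  classical
  refine ⟨aux_prod_compact hC, ?_, ?_⟩
  · -- measure zero part
    set π : K × (Fin (n + 1) → ℝ) → ℝ := fun p => p.2 0 with hπ
    have hπc : Continuous π := (continuous_apply (0 : Fin (n+1))).comp continuous_snd
    have hπm : Measurable π := hπc.measurable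
    set W : Set (K × (Fin (n + 1) → ℝ)) :=
      {p | ∀ i, i ≠ 0 → p.2 i ∈ Set.Icc (0 : ℝ) 1} with hW
    have hWclosed : IsClosed W := by
      have : W = ⋂ i, ⋂ (_ : i ≠ 0),
          (fun p : K × (Fin (n + 1) → ℝ) => p.2 i) ⁻¹' Set.Icc (0 : ℝ) 1 := by
        ext p; simp [hW]
      rw [this]
      exact isClosed_iInter fun i => isClosed_iInter fun _ =>
        isClosed_Icc.preimage ((continuous_apply i).comp continuous_snd)
    have hWm : MeasurableSet W := hWclosed.measurableSet
    set f : Measure ℝ := (μ.restrict W).map π with hf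
    have happly : ∀ B : Set ℝ, MeasurableSet B → f B = μ (π ⁻¹' B ∩ W) := by
      intro B hB
      rw [hf, Measure.map_apply hπm hB, Measure.restrict_apply (hπm hB)]
    have hident : ∀ L : Set ℝ, π ⁻¹' L ∩ W = (Set.univ : Set K) ×ˢ
        {v : Fin (n + 1) → ℝ | v 0 ∈ L ∧ ∀ i, i ≠ 0 → v i ∈ Set.Icc (0 : ℝ) 1} := by
      intro L
      ext p
      simp only [Set.mem_inter_iff, Set.mem_preimage, hW, Set.mem_setOf_eq,
        Set.mem_prod, Set.mem_univ, true_and, hπ]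
    haveI hfin : IsFiniteMeasureOnCompacts f := by
      constructor
      intro L hL
      rw [happly L hL.measurableSet, hident L]
      exact (aux_prod_compact hL).measure_lt_top
    haveI hinv : f.IsAddLeftInvariant := by
      constructor
      intro g
      ext B hB
      rw [Measure.map_apply (measurable_const_add g) hB,
        happly _ ((measurable_const_add g) hB), happly B hB]
      have hset : π ⁻¹' ((g + ·) ⁻¹' B) ∩ W
          = ((((0 : K), Pi.single (0 : Fin (n + 1)) g) : K × (Fin (n + 1) → ℝ)) + ·) ⁻¹'
            (π ⁻¹' B ∩ W) := by
        ext p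
        simp only [Set.mem_inter_iff, Set.mem_preimage, hπ, hW, Set.mem_setOf_eq,
          Prod.snd_add, Pi.add_apply]
        constructor
        · rintro ⟨h1, h2⟩
          refine ⟨by simpa using h1, fun i hi => by simpa [Pi.single_eq_of_ne hi] using h2 i hi⟩
        · rintro ⟨h1, h2⟩
          refine ⟨by simpa using h1, fun i hi => by simpa [Pi.single_eq_of_ne hi] using h2 i hi⟩
      rw [hset, measure_preimage_add]
    haveI : SigmaFinite f := inferInstance
    have habs : f ≪ (volume : Measure ℝ) :=
      MeasureTheory.Measure.absolutelyContinuous_isAddHaarMeasure f volume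
    have hfC : f C = 0 := habs hCnull
    rw [← hident C, ← happly C hC.measurableSet] at *
    exact hfC
  · -- covering part
    have hTinf : ¬ T.Countable := by
      intro hct
      have h0 : volume (⋃ t ∈ T, t +ᵥ C) = 0 := by
        refine (measure_biUnion_null_iff hct).2 fun t _ => ?_
        simpa using (by rw [measure_vadd]; exact hCnull : volume (t +ᵥ C) = 0)
      rw [hcov] at h0
      simp at h0
    have hℵ : Cardinal.aleph0 ≤ Cardinal.mk T := by
      by_contra h
      exact hTinf (Set.countable_coe_iff.mp (Cardinal.mk_le_aleph0_iff.mp (le_of_not_ge h)))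
    set φ : T × (Fin n → ℤ) → K × (Fin (n + 1) → ℝ) :=
      fun p => ((0 : K), Fin.cons (p.1 : ℝ) (fun j => ((p.2 j : ℤ) : ℝ))) with hφ
    refine ⟨Set.range φ, ?_, ?_⟩
    · calc Cardinal.mk (Set.range φ) ≤ Cardinal.mk (T × (Fin n → ℤ)) := Cardinal.mk_range_le
        _ ≤ Cardinal.mk T * Cardinal.aleph0 := by
            rw [Cardinal.mk_prod, Cardinal.lift_id, Cardinal.lift_id]
            exact mul_le_mul_right (Cardinal.mk_le_aleph0) _
        _ = Cardinal.mk T := Cardinal.mul_eq_left hℵ hℵ Cardinal.aleph0_ne_zero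
        _ ≤ κ := hT
    · rw [Set.eq_univ_iff_forall]
      rintro ⟨k, v⟩
      have hv0 : v 0 ∈ ⋃ t ∈ T, t +ᵥ C := by rw [hcov]; trivial
      obtain ⟨t, ht, c, hc, htc⟩ : ∃ t ∈ T, ∃ c ∈ C, t + c = v 0 := by
        simpa [Set.mem_vadd_set, Set.mem_add, eq_comm] using hv0
      refine Set.mem_iUnion₂.2 ⟨φ ⟨⟨t, ht⟩, fun j => ⌊v j.succ⌋⟩, ⟨_, rfl⟩, ?_⟩
      rw [Set.mem_vadd_set_iff_neg_vadd_mem]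
      refine ⟨Set.mem_univ _, ?_, ?_⟩
      · show (-φ _ + (k, v)).2 0 ∈ C
        simp only [hφ, Prod.snd_add, Prod.snd_neg, Pi.add_apply, Pi.neg_apply, Fin.cons_zero]
        have : -t + v 0 = c := by linarith
        rwa [this]
      · intro i hi
        obtain ⟨j, rfl⟩ : ∃ j : Fin n, i = j.succ := ⟨i.pred hi, (Fin.succ_pred i hi).symm⟩
        show (-φ _ + (k, v)).2 j.succ ∈ Set.Icc (0 : ℝ) 1
        simp only [hφ, Prod.snd_add, Prod.snd_neg, Pi.add_apply, Pi.neg_apply, Fin.cons_succ]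
        constructor
        · have := Int.floor_le (v j.succ); linarith
        · have := Int.lt_floor_add_one (v j.succ); linarith
end

section
/- Let G be a group and define a graph on G \ {0} by connecting each nonzero g with p·g (when p·g ≠ 0, rooting the tree at 0). If G is an infinite abelian p-group in which every element has only finitely many 'predecessors' (i.e., the equation p·x = g has only finitely many solutions for each g, equivalently G[p] is finite), then by König's lemma there exists an infinite sequence (gₙ) in G with g₀ ≠ 0 and p·gₙ₊₁ = gₙ for all n. -/
/-- König's lemma argument: if `G` is an infinite abelian `p`-group in which every element
has only finitely many predecessors under multiplication by `p` (equivalently, `G[p]` is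
finite), then there is an infinite sequence `(gₙ)` with `g₀ ≠ 0` and `p·gₙ₊₁ = gₙ`. -/
theorem exists_divisible_chain_of_finite_predecessors (p : ℕ) (hp : p.Prime)
    (G : Type*) [AddCommGroup G] [Infinite G]
    (hpG : ∀ g : G, ∃ n : ℕ, p ^ n • g = 0)
    (hpred : ∀ g : G, {x : G | p • x = g}.Finite) :
    ∃ g : ℕ → G, g 0 ≠ 0 ∧ ∀ n, p • g (n + 1) = g n := by
  classical
  -- iterated fibers are finite
  have hfin : ∀ (n : ℕ) (g : G), {x : G | p ^ n • x = g}.Finite := by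
    intro n
    induction n with
    | zero =>
      intro g
      have : {x : G | p ^ 0 • x = g} = {g} := by ext x; simp
      rw [this]; exact Set.finite_singleton g
    | succ n ih =>
      intro g
      have hsub : {x : G | p ^ (n + 1) • x = g} ⊆
          ⋃ y ∈ {y : G | p ^ n • y = g}, {x : G | p • x = y} := by
        intro x hx
        simp only [Set.mem_iUnion, Set.mem_setOf_eq]
        refine ⟨p • x, ?_, rfl⟩
        rw [← hx]
        rw [← mul_smul, ← pow_succ]
      exact Set.Finite.subset ((ih g).biUnion (fun y _ => hpred y)) hsub
  -- downward closedness of having a `p^n`-th root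
  have hdown : ∀ {m n : ℕ} {g : G}, m ≤ n → (∃ x, p ^ n • x = g) → ∃ x, p ^ m • x = g := by
    rintro m n g h ⟨x, hx⟩
    exact ⟨p ^ (n - m) • x, by rw [← mul_smul, ← pow_add, Nat.add_sub_cancel' h, hx]⟩
  -- pigeonhole: if a finite set contains, for each n, an element with a p^n-th root,
  -- then some element of it has p^n-th roots for all n
  have pigeon : ∀ (F : Set G), F.Finite →
      (∀ n : ℕ, ∃ y ∈ F, ∃ x, p ^ n • x = y) →
      ∃ y ∈ F, ∀ n : ℕ, ∃ x, p ^ n • x = y := by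
    intro F hF hall
    by_contra hcon
    push_neg at hcon
    set f : G → ℕ := fun y =>
      if h : ∃ n : ℕ, ∀ x, p ^ n • x ≠ y then h.choose else 0 with hfdef
    have hfspec : ∀ y ∈ F, ∀ x, p ^ (f y) • x ≠ y := by
      intro y hy
      obtain ⟨n, hn⟩ := hcon y hy
      have hex : ∃ n : ℕ, ∀ x, p ^ n • x ≠ y := ⟨n, hn⟩
      simp only [hfdef, dif_pos hex]
      exact hex.choose_spec
    set N : ℕ := hF.toFinset.sup f with hN
    obtain ⟨y, hyF, hroot⟩ := hall N
    have hle : f y ≤ N := Finset.le_sup (by simpa using hyF)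
    obtain ⟨x, hx⟩ := hdown hle hroot
    exact hfspec y hyF x hx
  -- the property propagates to a predecessor
  have step : ∀ g : G, (∀ n : ℕ, ∃ x, p ^ n • x = g) →
      ∃ y : G, (p • y = g) ∧ ∀ n : ℕ, ∃ x, p ^ n • x = y := by
    intro g hg
    have := pigeon {x : G | p • x = g} (hpred g) ?_
    · obtain ⟨y, hy, hyD⟩ := this
      exact ⟨y, hy, hyD⟩
    · intro n
      obtain ⟨x, hx⟩ := hg (n + 1)
      refine ⟨p ^ n • x, ?_, ⟨x, rfl⟩⟩
      show p • p ^ n • x = g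
      rw [← mul_smul, ← pow_succ', hx]
  -- a nonzero starting point with the property
  obtain ⟨y₀, hy₀F, hy₀D⟩ :
      ∃ y ∈ {y : G | y ≠ 0}, ∀ n : ℕ, ∃ x, p ^ n • x = y := by
    have key : ∀ n : ℕ, ∃ y : G, y ≠ 0 ∧ p • y = 0 ∧ ∃ x, p ^ n • x = y := by
      intro n
      obtain ⟨x, hx⟩ := Infinite.exists_notMem_finset (hfin n 0).toFinset
      have hxn : p ^ n • x ≠ 0 := by simpa using hx
      have hex : ∃ m : ℕ, p ^ m • x = 0 := hpG x
      set m := Nat.find hex with hm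
      have hm0 : p ^ m • x = 0 := Nat.find_spec hex
      have hnm : n < m := by
        by_contra h
        push_neg at h
        apply hxn
        have heq : p ^ n • x = p ^ (n - m) • p ^ m • x := by
          rw [← mul_smul, ← pow_add, Nat.sub_add_cancel h]
        rw [heq, hm0, smul_zero]
      have hm1 : 1 ≤ m := by omega
      refine ⟨p ^ (m - 1) • x, ?_, ?_, ⟨p ^ (m - 1 - n) • x, ?_⟩⟩
      · exact Nat.find_min hex (by omega)
      · rw [← mul_smul, ← pow_succ']
        have : m - 1 + 1 = m := by omega
        rw [this, hm0]
      · rw [← mul_smul, ← pow_add, Nat.add_sub_cancel' (by omega : n ≤ m - 1)]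
    have hsub : ∀ n : ℕ, ∃ y ∈ {y : G | p • y = 0 ∧ y ≠ 0}, ∃ x, p ^ n • x = y := by
      intro n
      obtain ⟨y, h1, h2, h3⟩ := key n
      exact ⟨y, ⟨h2, h1⟩, h3⟩
    have hFfin : {y : G | p • y = 0 ∧ y ≠ 0}.Finite :=
      (hpred 0).subset (fun y hy => hy.1)
    obtain ⟨y, hy, hyD⟩ := pigeon _ hFfin hsub
    exact ⟨y, hy.2, hyD⟩
  -- build the chain by recursion
  choose nxt hnxt1 hnxt2 using step
  let seq : ℕ → {a : G // ∀ n : ℕ, ∃ x, p ^ n • x = a} := fun n =>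
    Nat.rec ⟨y₀, hy₀D⟩ (fun _ a => ⟨nxt a.1 a.2, hnxt2 a.1 a.2⟩) n
  refine ⟨fun n => (seq n).1, hy₀F, ?_⟩
  intro n
  exact hnxt1 (seq n).1 (seq n).2
end
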